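/- For every real q > 0, the free energy F(q) := lim_{n→∞} (1/n) log s_n(q) of ternary square-free words exists, is finite, equals inf_{n ≥ 1} (1/n) log s_n(q), and the function t ↦ F(e^t) is convex on ℝ (i.e. F is convex as a function of log q on (0,∞)). -/

import Mathlib

/-- A word `w` is square-free if whenever `w = x ++ y ++ y ++ z`,
then `y` is the empty word. -/
def SquareFree {α : Type*} (w : List α) : Prop :=
  ∀ x y z : List α, w = x ++ y ++ y ++ z → y = []

/-- `s2 n k` is the number of ternary square-free words of length `n`
containing exactly `k` occurrences of the letter `a` (here `0 : Fin 3`). -/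
noncomputable def s2 (n k : ℕ) : ℕ :=
  Nat.card {w : List (Fin 3) // w.length = n ∧ SquareFree w ∧ w.count 0 = k}

/-- The weighted counting polynomial `s_n(q) = Σ_{k=0}^{n} s_{n,k} q^k`. -/
noncomputable def sPoly (n : ℕ) (q : ℝ) : ℝ :=
  ∑ k ∈ Finset.range (n + 1), (s2 n k : ℝ) * q ^ k

namespace TSF


/-- Thue–Morse sequence. -/
def t (n : ℕ) : Bool := decide ((Nat.digits 2 n).sum % 2 = 1)

theorem t_even (n : ℕ) : t (2 * n) = t n := by
  rcases Nat.eq_zero_or_pos n with h | h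
  · simp [h]
  · unfold t
    rw [Nat.digits_def' (by norm_num) (by omega)]
    have h1 : 2 * n % 2 = 0 := by omega
    have h2 : 2 * n / 2 = n := by omega
    rw [h1, h2]
    simp

theorem t_odd (n : ℕ) : t (2 * n + 1) = !t n := by
  unfold t
  rw [Nat.digits_def' (by norm_num) (by omega)]
  have h1 : (2 * n + 1) % 2 = 1 := by omega
  have h2 : (2 * n + 1) / 2 = n := by omega
  rw [h1, h2]
  rcases Nat.mod_two_eq_zero_or_one (Nat.digits 2 n).sum with h | h <;>
    simp [List.sum_cons, Nat.add_mod, h]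

theorem no_three (n : ℕ) : ¬(t n = t (n + 1) ∧ t (n + 1) = t (n + 2)) := by
  rintro ⟨h1, h2⟩
  rcases Nat.even_or_odd n with ⟨m, hm⟩ | ⟨m, hm⟩
  · have e1 : n = 2 * m := by omega
    have e2 : n + 1 = 2 * m + 1 := by omega
    rw [e1, t_even, t_odd] at h1
    cases t m <;> simp_all
  · have e1 : n + 1 = 2 * (m + 1) := by omega
    have e2 : n + 2 = 2 * (m + 1) + 1 := by omega
    rw [e1, t_even] at h2
    rw [e2, t_odd] at h2
    cases t (m + 1) <;> simp_all

theorem no_overlap : ∀ p, 0 < p → ∀ i, ¬(∀ j, j ≤ p → t (i + j) = t (i + p + j)) := by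
  intro p
  induction p using Nat.strong_induction_on with
  | _ p IH =>
  intro hp i H
  rcases Nat.even_or_odd p with ⟨q, hq⟩ | ⟨q, hq⟩
  · -- p = 2q even
    have hq1 : 1 ≤ q := by omega
    rcases Nat.even_or_odd i with ⟨m, hm⟩ | ⟨m, hm⟩
    · refine IH q (by omega) (by omega) m (fun j hj => ?_)
      have h1 := H (2 * j) (by omega)
      have e1 : i + 2 * j = 2 * (m + j) := by omega
      have e2 : i + p + 2 * j = 2 * (m + q + j) := by omega
      rw [e1, e2, t_even, t_even] at h1
      exact h1
    · refine IH q (by omega) (by omega) m (fun j hj => ?_)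
      have h1 := H (2 * j) (by omega)
      have e1 : i + 2 * j = 2 * (m + j) + 1 := by omega
      have e2 : i + p + 2 * j = 2 * (m + q + j) + 1 := by omega
      rw [e1, e2, t_odd, t_odd] at h1
      cases h2 : t (m + j) <;> cases h3 : t (m + q + j) <;> simp_all
  · -- p = 2q+1 odd
    by_cases hq0 : q = 0
    · -- p = 1
      subst hq0
      have h0 := H 0 (by omega)
      have h1 := H 1 (by omega)
      have e0 : i + 0 = i := by omega
      have e1 : i + p + 0 = i + 1 := by omega
      have e2 : i + p + 1 = i + 2 := by omega
      rw [e0, e1] at h0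
      rw [e2] at h1
      exact no_three i ⟨h0, h1⟩
    · by_cases hsp : p = 3 ∧ ¬ Even i
      · -- special case p = 3, i odd
        obtain ⟨hp3, hio⟩ := hsp
        obtain ⟨m, hm⟩ : ∃ m, i = 2 * m + 1 := by
          rcases Nat.even_or_odd i with h | ⟨m, hm⟩
          · exact absurd h hio
          · exact ⟨m, by omega⟩
        have E0 := H 0 (by omega)
        have E1 := H 1 (by omega)
        have E2 := H 2 (by omega)
        have E3 := H 3 (by omega)
        have e0 : i + 0 = 2 * m + 1 := by omega
        have e1 : i + 1 = 2 * (m + 1) := by omega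
        have e2 : i + 2 = 2 * (m + 1) + 1 := by omega
        have e3 : i + p + 0 = 2 * (m + 2) := by omega
        have e4 : i + p + 1 = 2 * (m + 2) + 1 := by omega
        have e5 : i + p + 2 = 2 * (m + 3) := by omega
        have e6 : i + 3 = 2 * (m + 2) := by omega
        have e7 : i + p + 3 = 2 * (m + 3) + 1 := by omega
        rw [e0, e3, t_odd, t_even] at E0
        rw [e1, e4, t_even, t_odd] at E1
        rw [e2, e5, t_odd, t_even] at E2
        rw [e6, e7, t_even, t_odd] at E3
        cases h2 : t (m + 2) <;> cases h3 : t (m + 3) <;> simp_all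
      · -- generic odd case: find two consecutive "even" positions
        have key : ∀ m, i ≤ 2 * m → 2 * m + 1 ≤ i + p → t (m + q) = t (m + q + 1) := by
          intro m h1 h2
          have ha := H (2 * m - i) (by omega)
          have hb := H (2 * m + 1 - i) (by omega)
          have e1 : i + (2 * m - i) = 2 * m := by omega
          have e2 : i + p + (2 * m - i) = 2 * (m + q) + 1 := by omega
          have e3 : i + (2 * m + 1 - i) = 2 * m + 1 := by omega
          have e4 : i + p + (2 * m + 1 - i) = 2 * (m + q + 1) := by omega
          rw [e1, e2, t_even, t_odd] at ha
          rw [e3, e4, t_odd, t_even] at hb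
          cases h5 : t m <;> cases h6 : t (m + q) <;> simp_all
        obtain ⟨m0, hm0a, hm0b⟩ : ∃ m0, i ≤ 2 * m0 ∧ 2 * (m0 + 1) + 1 ≤ i + p := by
          rcases Nat.even_or_odd i with ⟨m, hm⟩ | ⟨m, hm⟩
          · exact ⟨m, by omega, by omega⟩
          · -- i odd; then not (p = 3), so p ≥ 5
            have hp5 : 5 ≤ p := by
              rcases Nat.lt_or_ge p 5 with h | h
              · exfalso; apply hsp
                constructor
                · omega
                · rintro ⟨m', hm'⟩; omega
              · exact h
            exact ⟨m + 1, by omega, by omega⟩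
        have k1 := key m0 hm0a (by omega)
        have k2 := key (m0 + 1) (by omega) (by omega)
        have e : m0 + 1 + q = m0 + q + 1 := by omega
        rw [e] at k2
        refine no_three (m0 + q) ⟨k1, ?_⟩
        have e2 : m0 + q + 2 = m0 + q + 1 + 1 := by omega
        rw [e2]
        exact k2



/-- square-free ternary sequence derived from Thue–Morse -/
noncomputable def u (n : ℕ) : Fin 3 := if t n = t (n + 1) then 2 else if t n then 1 else 0

theorem u_step (n : ℕ) : t (n + 1) = if u n = 2 then t n else !t n := by
  unfold u
  by_cases h : t n = t (n + 1)
  · simp [h]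
  · have h' : t (n + 1) = !t n := by cases h1 : t n <;> cases h2 : t (n + 1) <;> simp_all
    rw [if_neg h, h']
    cases t n <;> simp

theorem u_code {n : ℕ} (h : u n ≠ 2) : t n = (u n == 1) := by
  unfold u at *
  by_cases h1 : t n = t (n + 1)
  · simp [h1] at h
  · rw [if_neg h1] at *
    cases h2 : t n <;> simp [h2]

theorem u_sqf : ∀ i p, 0 < p → ¬(∀ j, j < p → u (i + j) = u (i + p + j)) := by
  intro i p hp H
  by_cases hc : t i = t (i + p)
  · -- propagate equality: overlap in t
    refine no_overlap p hp i (fun j => ?_)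
    induction j with
    | zero => intro _; simpa using hc
    | succ j ih =>
      intro hj
      have h1 := ih (by omega)
      have h2 := H j (by omega)
      have e1 : i + (j + 1) = i + j + 1 := by omega
      have e2 : i + p + (j + 1) = i + p + j + 1 := by omega
      rw [e1, e2, u_step (i + j), u_step (i + p + j), h2, h1]
  · -- complement case
    have hinv : ∀ j, j ≤ p → t (i + j) = !t (i + p + j) := by
      intro j
      induction j with
      | zero =>
        intro _
        have : t i = !t (i + p) := by
          cases h1 : t i <;> cases h2 : t (i + p) <;> simp_all
        simpa using this
      | succ j ih =>
        intro hj
        have h1 := ih (by omega)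
        have h2 := H j (by omega)
        have e1 : i + (j + 1) = i + j + 1 := by omega
        have e2 : i + p + (j + 1) = i + p + j + 1 := by omega
        rw [e1, e2, u_step (i + j), u_step (i + p + j), h2]
        split
        · exact h1
        · rw [h1, Bool.not_not]
    -- every u in the window is 2
    have hu2 : ∀ j, j < p → u (i + j) = 2 := by
      intro j hj
      by_contra hne
      have hb : u (i + p + j) ≠ 2 := by rw [← H j hj]; exact hne
      have c1 := u_code hne
      have c2 := u_code hb
      rw [H j hj] at c1
      have := hinv j (by omega)
      rw [c1, c2] at this
      exact absurd this (by cases hh : (u (i + p + j) == 1) <;> simp [hh])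
    -- so t is constant on [i, i+p]
    have hconst : ∀ j, j ≤ p → t (i + j) = t i := by
      intro j
      induction j with
      | zero => intro _; simp
      | succ j ih =>
        intro hj
        have h1 := ih (by omega)
        have hu := hu2 j (by omega)
        have := u_step (i + j)
        rw [hu] at this
        simp only [if_pos rfl, if_true] at this
        have e1 : i + (j + 1) = i + j + 1 := by omega
        rw [e1, this, h1]
    exact hc (by rw [← hconst p (le_refl p)])



theorem exists_sqf (n : ℕ) :
    ∃ w : List (Fin 3), w.length = n ∧ SquareFree w := by
  refine ⟨(List.range n).map u, by simp, ?_⟩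
  intro x y z hw
  by_contra hy
  have hp : 0 < y.length := List.length_pos_iff.mpr hy
  set i := x.length with hi
  set p := y.length with hpdef
  have hlen : n = i + p + p + z.length := by
    have := congrArg List.length hw
    simp at this
    omega
  -- getElem of the mapped word
  have hget : ∀ (k : ℕ) (hk : k < n), u k = ((List.range n).map u)[k]'(by simpa using hk) := by
    intro k hk
    simp
  refine u_sqf i p hp (fun j hj => ?_)
  have hj1 : i + j < n := by omega
  have hj2 : i + p + j < n := by omega
  have h1 : ((List.range n).map u)[i + j]'(by simpa using hj1) = y[j]'(by omega) := by
    rw [List.getElem_of_eq hw]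
    rw [List.getElem_append_left (by simp [hpdef] <;> omega)]
    rw [List.getElem_append_left (by simp <;> omega)]
    rw [List.getElem_append_right (by omega)]
    congr 1
    omega
  have h2 : ((List.range n).map u)[i + p + j]'(by simpa using hj2) = y[j]'(by omega) := by
    rw [List.getElem_of_eq hw]
    rw [List.getElem_append_left (by simp [hpdef] <;> omega)]
    rw [List.getElem_append_right (by simp <;> omega)]
    congr 1
    simp [hpdef] <;> omega
  rw [hget (i + j) hj1, hget (i + p + j) hj2, h1, h2]



open Finset

open scoped Classical in
/-- the finset of ternary square-free words of length `n` -/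
noncomputable def S (n : ℕ) : Finset (List (Fin 3)) :=
  (Finset.univ.image (fun f : Fin n → Fin 3 => List.ofFn f)).filter
    (fun w => SquareFree w)

theorem mem_S {n : ℕ} {w : List (Fin 3)} :
    w ∈ S n ↔ w.length = n ∧ SquareFree w := by
  classical
  unfold S
  rw [Finset.mem_filter, Finset.mem_image]
  constructor
  · rintro ⟨⟨f, -, rfl⟩, h2⟩
    exact ⟨by simp, h2⟩
  · rintro ⟨h1, h2⟩
    refine ⟨⟨fun i => w.get (Fin.cast h1.symm i), Finset.mem_univ _, ?_⟩, h2⟩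
    apply List.ext_getElem
    · simp [h1]
    · intro i hi1 hi2
      simp

theorem s2_eq_card (n k : ℕ) :
    s2 n k = ((S n).filter (fun w => w.count 0 = k)).card := by
  classical
  have hset : {w : List (Fin 3) | w.length = n ∧ SquareFree w ∧ w.count 0 = k}
      = ↑((S n).filter (fun w => w.count 0 = k)) := by
    ext w
    simp only [Set.mem_setOf_eq, Finset.coe_filter, Set.mem_setOf_eq, Finset.mem_coe,
      Finset.mem_filter, mem_S]
    tauto
  rw [s2]
  rw [show {w : List (Fin 3) // w.length = n ∧ SquareFree w ∧ w.count 0 = k}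
      = ↥{w : List (Fin 3) | w.length = n ∧ SquareFree w ∧ w.count 0 = k} from rfl]
  rw [Nat.card_coe_set_eq, hset, Set.ncard_coe_finset]

theorem sPoly_eq_sum (n : ℕ) (q : ℝ) :
    sPoly n q = ∑ w ∈ S n, q ^ (w.count 0) := by
  classical
  rw [sPoly]
  rw [← Finset.sum_fiberwise_of_maps_to (g := fun w : List (Fin 3) => w.count 0)
      (t := Finset.range (n + 1)) (fun w hw => by
        rw [Finset.mem_range]
        show w.count 0 < n + 1
        have := List.count_le_length (a := (0 : Fin 3)) (l := w)
        have hl := (mem_S.mp hw).1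
        omega)]
  refine Finset.sum_congr rfl (fun k _ => ?_)
  rw [s2_eq_card]
  have hcongr : ∑ w ∈ (S n).filter (fun w => w.count 0 = k), q ^ w.count 0
      = ∑ _w ∈ (S n).filter (fun w => w.count 0 = k), q ^ k := by
    refine Finset.sum_congr rfl (fun w hw => ?_)
    rw [Finset.mem_filter] at hw
    rw [hw.2]
  rw [hcongr, Finset.sum_const, nsmul_eq_mul]




theorem sPoly_ge (n : ℕ) {q : ℝ} (hq : 0 < q) : (min 1 q) ^ n ≤ sPoly n q := by
  obtain ⟨w, hw1, hw2⟩ := exists_sqf n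
  have hmem : w ∈ S n := mem_S.mpr ⟨hw1, hw2⟩
  rw [sPoly_eq_sum]
  have hmin0 : (0 : ℝ) < min 1 q := lt_min one_pos hq
  have h1 : (min 1 q) ^ n ≤ (min 1 q) ^ (w.count 0) := by
    apply pow_le_pow_of_le_one hmin0.le (min_le_left _ _)
    have := List.count_le_length (a := (0 : Fin 3)) (l := w)
    omega
  have h2 : (min 1 q) ^ (w.count 0) ≤ q ^ (w.count 0) :=
    pow_le_pow_left₀ hmin0.le (min_le_right _ _) _
  refine le_trans (le_trans h1 h2) ?_
  exact Finset.single_le_sum (fun v _ => pow_nonneg hq.le _) hmem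

theorem sPoly_pos (n : ℕ) {q : ℝ} (hq : 0 < q) : 0 < sPoly n q :=
  lt_of_lt_of_le (pow_pos (lt_min one_pos hq) n) (sPoly_ge n hq)

theorem sf_take (m : ℕ) {w : List (Fin 3)} (hw : SquareFree w) : SquareFree (w.take m) := by
  intro x y z h
  apply hw x y (z ++ w.drop m)
  conv_lhs => rw [← List.take_append_drop m w]
  rw [h]
  simp [List.append_assoc]

theorem sf_drop (m : ℕ) {w : List (Fin 3)} (hw : SquareFree w) : SquareFree (w.drop m) := by
  intro x y z h
  apply hw (w.take m ++ x) y z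
  conv_lhs => rw [← List.take_append_drop m w]
  rw [h]
  simp [List.append_assoc]

theorem sPoly_submul (m n : ℕ) {q : ℝ} (hq : 0 ≤ q) :
    sPoly (m + n) q ≤ sPoly m q * sPoly n q := by
  classical
  rw [sPoly_eq_sum, sPoly_eq_sum, sPoly_eq_sum, Finset.sum_mul_sum]
  set g : List (Fin 3) → List (Fin 3) × List (Fin 3) := fun w => (w.take m, w.drop m) with hg
  have himg : ∀ w ∈ S (m + n), g w ∈ (S m) ×ˢ (S n) := by
    intro w hw
    rw [mem_S] at hw
    rw [Finset.mem_product]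
    constructor
    · exact mem_S.mpr ⟨by rw [List.length_take]; omega, sf_take m hw.2⟩
    · exact mem_S.mpr ⟨by rw [List.length_drop]; omega, sf_drop m hw.2⟩
  have hinj : ∀ w₁ ∈ S (m + n), ∀ w₂ ∈ S (m + n), g w₁ = g w₂ → w₁ = w₂ := by
    intro w₁ _ w₂ _ h
    have h1 : w₁.take m = w₂.take m := congrArg Prod.fst h
    have h2 : w₁.drop m = w₂.drop m := congrArg Prod.snd h
    rw [← List.take_append_drop m w₁, ← List.take_append_drop m w₂, h1, h2]
  have hcount : ∀ w ∈ S (m + n),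
      (q : ℝ) ^ (w.count 0) = q ^ ((w.take m).count 0) * q ^ ((w.drop m).count 0) := by
    intro w _
    rw [← pow_add]
    congr 1
    conv_lhs => rw [← List.take_append_drop m w]
    rw [List.count_append]
  calc ∑ w ∈ S (m + n), q ^ (w.count 0)
      = ∑ w ∈ S (m + n), (fun p : List (Fin 3) × List (Fin 3) =>
          q ^ (p.1.count 0) * q ^ (p.2.count 0)) (g w) :=
        Finset.sum_congr rfl (fun w hw => hcount w hw)
    _ = ∑ p ∈ (S (m + n)).image g, q ^ (p.1.count 0) * q ^ (p.2.count 0) :=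
        (Finset.sum_image (f := fun p : List (Fin 3) × List (Fin 3) =>
          q ^ (p.1.count 0) * q ^ (p.2.count 0)) hinj).symm
    _ ≤ ∑ p ∈ (S m) ×ˢ (S n), q ^ (p.1.count 0) * q ^ (p.2.count 0) := by
        apply Finset.sum_le_sum_of_subset_of_nonneg
        · rw [Finset.image_subset_iff]
          exact himg
        · exact fun p _ _ => mul_nonneg (pow_nonneg hq _) (pow_nonneg hq _)
    _ = ∑ u ∈ S m, ∑ v ∈ S n, q ^ (u.count 0) * q ^ (v.count 0) := Finset.sum_product _ _ _




open Real Filter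

noncomputable def F (q : ℝ) : ℝ :=
  sInf ((fun n : ℕ => Real.log (sPoly n q) / n) '' Set.Ici 1)

theorem hsub {q : ℝ} (hq : 0 < q) :
    Subadditive (fun n : ℕ => Real.log (sPoly n q)) := by
  intro m n
  have h1 : sPoly (m + n) q ≤ sPoly m q * sPoly n q := sPoly_submul m n hq.le
  calc Real.log (sPoly (m + n) q) ≤ Real.log (sPoly m q * sPoly n q) :=
        Real.log_le_log (sPoly_pos (m + n) hq) h1
    _ = Real.log (sPoly m q) + Real.log (sPoly n q) :=
        Real.log_mul (sPoly_pos m hq).ne' (sPoly_pos n hq).ne'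

theorem hbdd {q : ℝ} (hq : 0 < q) :
    BddBelow (Set.range fun n : ℕ => Real.log (sPoly n q) / n) := by
  refine ⟨Real.log (min 1 q), ?_⟩
  rintro x ⟨n, rfl⟩
  have hmin : (0 : ℝ) < min 1 q := lt_min one_pos hq
  have hlog0 : Real.log (min 1 q) ≤ 0 := Real.log_nonpos hmin.le (min_le_left _ _)
  rcases Nat.eq_zero_or_pos n with h | h
  · simp [h, hlog0]
  · have h1 : (n : ℝ) * Real.log (min 1 q) ≤ Real.log (sPoly n q) := by
      rw [← Real.log_pow]
      exact Real.log_le_log (pow_pos hmin n) (sPoly_ge n hq)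
    have hn : (0 : ℝ) < n := by positivity
    show Real.log (min 1 q) ≤ Real.log (sPoly n q) / (n : ℝ)
    rw [le_div_iff₀ hn]
    nlinarith [h1, hlog0]

theorem F_tendsto {q : ℝ} (hq : 0 < q) :
    Tendsto (fun n : ℕ => Real.log (sPoly n q) / n) atTop (nhds (F q)) := by
  have h := (hsub hq).tendsto_lim (hbdd hq)
  have : (hsub hq).lim = F q := by rw [Subadditive.lim]; rfl
  rwa [this] at h

theorem F_eq_iInf {q : ℝ} (hq : 0 < q) :
    F q = ⨅ n : {m : ℕ // 1 ≤ m}, Real.log (sPoly n.1 q) / n.1 := by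
  rw [F, iInf]
  congr 1
  ext x
  constructor
  · rintro ⟨n, hn, rfl⟩
    exact ⟨⟨n, hn⟩, rfl⟩
  · rintro ⟨⟨n, hn⟩, rfl⟩
    exact ⟨n, hn, rfl⟩

theorem key_convex (n : ℕ) {x y a b : ℝ} (ha : 0 < a) (hb : 0 < b) (hab : a + b = 1) :
    Real.log (sPoly n (Real.exp (a * x + b * y))) ≤
      a * Real.log (sPoly n (Real.exp x)) + b * Real.log (sPoly n (Real.exp y)) := by
  have ha1 : a < 1 := by linarith
  have hpq : Real.HolderConjugate (1 / a) (1 / b) := by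
    constructor
    · rw [one_div, inv_inv, one_div, inv_inv, inv_one]; exact hab
    · positivity
    · positivity
  set f : List (Fin 3) → ℝ := fun w => Real.exp (x * (w.count 0)) ^ a with hf
  set g : List (Fin 3) → ℝ := fun w => Real.exp (y * (w.count 0)) ^ b with hg
  have hfg : ∀ w ∈ S n, (Real.exp (a * x + b * y)) ^ (w.count 0) = f w * g w := by
    intro w _
    rw [hf, hg]
    simp only
    rw [← Real.exp_mul, ← Real.exp_mul, ← Real.exp_add]
    rw [← Real.rpow_natCast (Real.exp (a * x + b * y)) (w.count 0), ← Real.exp_mul]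
    congr 1
    ring
  have hstep : sPoly n (Real.exp (a * x + b * y)) ≤
      (sPoly n (Real.exp x)) ^ a * (sPoly n (Real.exp y)) ^ b := by
    rw [sPoly_eq_sum, sPoly_eq_sum, sPoly_eq_sum]
    rw [Finset.sum_congr rfl hfg]
    have hH := Real.inner_le_Lp_mul_Lq_of_nonneg (S n) (f := f) (g := g) hpq
      (fun w _ => Real.rpow_nonneg (Real.exp_pos _).le _)
      (fun w _ => Real.rpow_nonneg (Real.exp_pos _).le _)
    have e1 : ∀ w, f w ^ (1 / a) = Real.exp (x * (w.count 0)) := by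
      intro w
      rw [hf]
      simp only
      rw [← Real.rpow_mul (Real.exp_pos _).le, mul_one_div, div_self ha.ne', Real.rpow_one]
    have e2 : ∀ w, g w ^ (1 / b) = Real.exp (y * (w.count 0)) := by
      intro w
      rw [hg]
      simp only
      rw [← Real.rpow_mul (Real.exp_pos _).le, mul_one_div, div_self hb.ne', Real.rpow_one]
    have e3 : (1 : ℝ) / (1 / a) = a := by field_simp
    have e4 : (1 : ℝ) / (1 / b) = b := by field_simp
    have e5 : ∀ w : List (Fin 3), (Real.exp x) ^ (w.count 0) = Real.exp (x * (w.count 0)) := by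
      intro w
      rw [← Real.rpow_natCast (Real.exp x), ← Real.exp_mul]
    have e6 : ∀ w : List (Fin 3), (Real.exp y) ^ (w.count 0) = Real.exp (y * (w.count 0)) := by
      intro w
      rw [← Real.rpow_natCast (Real.exp y), ← Real.exp_mul]
    simp only [e1, e2, e3, e4] at hH
    calc ∑ w ∈ S n, f w * g w ≤ _ := hH
      _ = (∑ w ∈ S n, Real.exp x ^ (w.count 0)) ^ a *
          (∑ w ∈ S n, Real.exp y ^ (w.count 0)) ^ b := by
            rw [Finset.sum_congr rfl (fun w _ => e5 w), Finset.sum_congr rfl (fun w _ => e6 w)]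
  calc Real.log (sPoly n (Real.exp (a * x + b * y)))
      ≤ Real.log ((sPoly n (Real.exp x)) ^ a * (sPoly n (Real.exp y)) ^ b) :=
        Real.log_le_log (sPoly_pos n (Real.exp_pos _)) hstep
    _ = a * Real.log (sPoly n (Real.exp x)) + b * Real.log (sPoly n (Real.exp y)) := by
        rw [Real.log_mul (Real.rpow_pos_of_pos (sPoly_pos n (Real.exp_pos _)) _).ne'
          (Real.rpow_pos_of_pos (sPoly_pos n (Real.exp_pos _)) _).ne',
          Real.log_rpow (sPoly_pos n (Real.exp_pos _)),
          Real.log_rpow (sPoly_pos n (Real.exp_pos _))]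

theorem F_convex : ConvexOn ℝ Set.univ (fun t : ℝ => F (Real.exp t)) := by
  refine ⟨convex_univ, ?_⟩
  intro x _ y _ a b ha hb hab
  rcases eq_or_lt_of_le ha with rfl | ha'
  · simp only [zero_smul, zero_add, smul_eq_mul]
    have : b = 1 := by linarith
    subst this
    simp
  rcases eq_or_lt_of_le hb with rfl | hb'
  · simp only [zero_smul, add_zero, smul_eq_mul]
    have : a = 1 := by linarith
    subst this
    simp
  simp only [smul_eq_mul]
  have hT1 := F_tendsto (Real.exp_pos (a * x + b * y))
  have hT2 := ((F_tendsto (Real.exp_pos x)).const_mul a).add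
    ((F_tendsto (Real.exp_pos y)).const_mul b)
  refine le_of_tendsto_of_tendsto' hT1 hT2 (fun n => ?_)
  rcases Nat.eq_zero_or_pos n with rfl | hn
  · simp
  · have hkey := key_convex n (x := x) (y := y) ha' hb' hab
    have hn' : (0 : ℝ) < n := by positivity
    rw [div_le_iff₀ hn']
    have expand : (a * (Real.log (sPoly n (Real.exp x)) / n)
        + b * (Real.log (sPoly n (Real.exp y)) / n)) * n
        = a * Real.log (sPoly n (Real.exp x)) + b * Real.log (sPoly n (Real.exp y)) := by
      field_simp
    rw [expand]
    exact hkey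

end TSF

/-- For every real `q > 0`, the free energy `F(q) = lim (1/n) log s_n(q)` of
ternary square-free words exists (as a finite real number), equals
`inf_{n ≥ 1} (1/n) log s_n(q)`, and `t ↦ F(exp t)` is convex on `ℝ`. -/
theorem ternary_squareFree_free_energy_exists :
    ∃ F : ℝ → ℝ,
      (∀ q : ℝ, 0 < q →
        Filter.Tendsto (fun n : ℕ => Real.log (sPoly n q) / n) Filter.atTop
          (nhds (F q))) ∧
      (∀ q : ℝ, 0 < q →
        F q = ⨅ n : {m : ℕ // 1 ≤ m}, Real.log (sPoly n.1 q) / n.1) ∧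
      ConvexOn ℝ Set.univ (fun t : ℝ => F (Real.exp t)) := by
  exact ⟨TSF.F, fun q hq => TSF.F_tendsto hq, fun q hq => TSF.F_eq_iInf hq, TSF.F_convex⟩
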